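/- Let k be a commutative ring, A a commutative k-algebra, and D = (D_α)_{α∈Δ} a Δ-variate Hasse–Schmidt derivation of A over k, where Δ ⊆ ℕ^q is a co-ideal. Suppose β ∈ Δ with β ≠ 0 and gcd(β₁,...,β_q) = 1, and D_γ = 0 for every γ ∈ Δ \ {0} whose ∼-class is strictly smaller than [β]. Then the sequence E = (E_r)_{r} defined by E_r = D_{rβ} (for r with rβ ∈ Δ) satisfies the Hasse–Schmidt conditions: E₀ = id and E_r(xy) = Σ_{s+t=r} E_s(x)E_t(y) for all x, y ∈ A. -/

import Mathlib

/-- Normalization of a pair of naturals: `g(a,b) = (0,0)` if `a = b = 0`, otherwise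
`(a,b)/gcd(a,b)`. -/
def g2 (a b : ℕ) : ℕ × ℕ :=
  if a = 0 ∧ b = 0 then (0, 0) else (a / Nat.gcd a b, b / Nat.gcd a b)

/-- The slope order on pairs: `u ≺² v ⟺ v₂u₁ < v₁u₂`. -/
def prec2 (u v : ℕ × ℕ) : Prop := v.2 * u.1 < v.1 * u.2

/-- The recursively defined total order `≺^q` on `q`-tuples (represented as lists). -/
def precL : List ℕ → List ℕ → Prop
  | [a, b], [c, d] => prec2 (a, b) (c, d)
  | a :: b :: c :: r, a' :: b' :: c' :: r' =>
      (g2 a b = (0, 0) ∧ g2 a' b' ≠ (0, 0)) ∨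
      (g2 a b ≠ (0, 0) ∧ g2 a' b' ≠ (0, 0) ∧ prec2 (g2 a b) (g2 a' b')) ∨
      (g2 a b = g2 a' b' ∧ precL (Nat.gcd a b :: c :: r) (Nat.gcd a' b' :: c' :: r'))
  | _, _ => False
termination_by l _ => l.length

lemma precL_pair (a b c d : ℕ) : precL [a,b] [c,d] = prec2 (a,b) (c,d) := by rw [precL]

lemma precL_cons (a b c a' b' c' : ℕ) (r r' : List ℕ) : precL (a::b::c::r) (a'::b'::c'::r') =
      ((g2 a b = (0, 0) ∧ g2 a' b' ≠ (0, 0)) ∨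
      (g2 a b ≠ (0, 0) ∧ g2 a' b' ≠ (0, 0) ∧ prec2 (g2 a b) (g2 a' b')) ∨
      (g2 a b = g2 a' b' ∧ precL (Nat.gcd a b :: c :: r) (Nat.gcd a' b' :: c' :: r'))) := by
  rw [precL]

lemma g2_eq_zero_iff {a b : ℕ} : g2 a b = (0,0) ↔ a = 0 ∧ b = 0 := by
  unfold g2
  split
  · simp_all
  · rename_i h
    simp only [Prod.mk.injEq]
    constructor
    · rintro ⟨ha, hb⟩
      have hga := Nat.div_mul_cancel (Nat.gcd_dvd_left a b)
      have hgb := Nat.div_mul_cancel (Nat.gcd_dvd_right a b)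
      rw [ha, zero_mul] at hga
      rw [hb, zero_mul] at hgb
      exact ⟨hga.symm, hgb.symm⟩
    · intro hab; exact absurd hab h

lemma g2_mul {t : ℕ} (ht : t ≠ 0) (a b : ℕ) : g2 (t*a) (t*b) = g2 a b := by
  unfold g2
  have : (t*a = 0 ∧ t*b = 0) ↔ (a = 0 ∧ b = 0) := by
    constructor
    · rintro ⟨h1, h2⟩
      exact ⟨by simpa [ht] using h1, by simpa [ht] using h2⟩
    · rintro ⟨h1, h2⟩; simp [h1, h2]
  rw [if_congr this rfl rfl]
  split
  · rfl
  · rw [Nat.gcd_mul_left, Nat.mul_div_mul_left _ _ (Nat.pos_of_ne_zero ht),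
      Nat.mul_div_mul_left _ _ (Nat.pos_of_ne_zero ht)]

lemma prec2_smul {s t : ℕ} (hs : s ≠ 0) (ht : t ≠ 0) (a b c d : ℕ) :
    prec2 (s*a, s*b) (t*c, t*d) ↔ prec2 (a,b) (c,d) := by
  unfold prec2
  simp only
  have h : t * s ≠ 0 := mul_ne_zero ht hs
  constructor
  · intro hlt
    have : (t*s) * (d*a) < (t*s) * (c*b) := by ring_nf; ring_nf at hlt; linarith
    exact Nat.lt_of_mul_lt_mul_left this
  · intro hlt
    have : (t*s) * (d*a) < (t*s) * (c*b) :=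
      Nat.mul_lt_mul_of_pos_left hlt (Nat.pos_of_ne_zero h)
    calc t*d*(s*a) = (t*s)*(d*a) := by ring
    _ < (t*s)*(c*b) := this
    _ = t*c*(s*b) := by ring

lemma g2_spec {a b : ℕ} (h : ¬(a = 0 ∧ b = 0)) :
    Nat.gcd a b ≠ 0 ∧ a = Nat.gcd a b * (g2 a b).1 ∧ b = Nat.gcd a b * (g2 a b).2
      ∧ Nat.Coprime (g2 a b).1 (g2 a b).2 := by
  have hg : Nat.gcd a b ≠ 0 := by
    intro h0
    exact h ⟨Nat.eq_zero_of_gcd_eq_zero_left h0, Nat.eq_zero_of_gcd_eq_zero_right h0⟩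
  unfold g2
  rw [if_neg h]
  exact ⟨hg, (Nat.mul_div_cancel' (Nat.gcd_dvd_left a b)).symm,
    (Nat.mul_div_cancel' (Nat.gcd_dvd_right a b)).symm,
    Nat.coprime_div_gcd_div_gcd (Nat.pos_of_ne_zero hg)⟩

lemma g2_eq_of_cross {a b c d : ℕ} (h1 : ¬(a = 0 ∧ b = 0)) (h2 : ¬(c = 0 ∧ d = 0))
    (h : a * d = c * b) : g2 a b = g2 c d := by
  obtain ⟨hg, ha, hb, hcop⟩ := g2_spec h1
  obtain ⟨hh, hc, hd, hcop'⟩ := g2_spec h2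
  set p := (g2 a b).1; set q := (g2 a b).2
  set p' := (g2 c d).1; set q' := (g2 c d).2
  have key : p * q' = p' * q := by
    have : (Nat.gcd a b * Nat.gcd c d) * (p * q') = (Nat.gcd a b * Nat.gcd c d) * (p' * q) := by
      calc (Nat.gcd a b * Nat.gcd c d) * (p * q') = (Nat.gcd a b * p) * (Nat.gcd c d * q') := by ring
      _ = a * d := by rw [← ha, ← hd]
      _ = c * b := h
      _ = (Nat.gcd c d * p') * (Nat.gcd a b * q) := by rw [← hc, ← hb]
      _ = (Nat.gcd a b * Nat.gcd c d) * (p' * q) := by ring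
    exact Nat.eq_of_mul_eq_mul_left (Nat.pos_of_ne_zero (mul_ne_zero hg hh)) this
  have hpp : p = p' := by
    have d1 : p ∣ p' := hcop.dvd_of_dvd_mul_right ⟨q', key.symm⟩
    have d2 : p' ∣ p := hcop'.dvd_of_dvd_mul_right ⟨q, key⟩
    exact Nat.dvd_antisymm d1 d2
  have hqq : q = q' := by
    have d1 : q ∣ q' := Nat.Coprime.dvd_of_dvd_mul_left hcop.symm
      ⟨p', by rw [key, Nat.mul_comm]⟩
    have d2 : q' ∣ q := Nat.Coprime.dvd_of_dvd_mul_left hcop'.symm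
      ⟨p, by rw [← key, Nat.mul_comm]⟩
    exact Nat.dvd_antisymm d1 d2
  exact Prod.ext hpp hqq

lemma prec2_g2 {a b c d : ℕ} (h1 : ¬(a = 0 ∧ b = 0)) (h2 : ¬(c = 0 ∧ d = 0)) :
    prec2 (g2 a b) (g2 c d) ↔ prec2 (a,b) (c,d) := by
  obtain ⟨hg, ha, hb, -⟩ := g2_spec h1
  obtain ⟨hh, hc, hd, -⟩ := g2_spec h2
  have h := prec2_smul hg hh (g2 a b).1 (g2 a b).2 (g2 c d).1 (g2 c d).2
  rw [← ha, ← hb, ← hc, ← hd] at h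
  exact h.symm

lemma pair_sum {a b a' b' : ℕ} (h1 : ¬(a = 0 ∧ b = 0)) (h2 : ¬(a' = 0 ∧ b' = 0))
    (hcross : a * b' = a' * b) :
    g2 a b = g2 a' b' ∧ g2 (a+a') (b+b') = g2 a b ∧
      Nat.gcd (a+a') (b+b') = Nat.gcd a b + Nat.gcd a' b' := by
  have h3 : ¬(a + a' = 0 ∧ b + b' = 0) := by
    rintro ⟨hs1, hs2⟩
    exact h1 ⟨by omega, by omega⟩
  have e1 : g2 a b = g2 a' b' := g2_eq_of_cross h1 h2 hcross
  have e2 : g2 (a+a') (b+b') = g2 a b := by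
    refine (g2_eq_of_cross h1 h3 ?_).symm
    rw [Nat.mul_add, Nat.add_mul, hcross]
  refine ⟨e1, e2, ?_⟩
  obtain ⟨hg, ha, hb, hcop⟩ := g2_spec h1
  obtain ⟨hg', ha', hb', -⟩ := g2_spec h2
  rw [← e1] at ha' hb'
  have hsa : a + a' = (Nat.gcd a b + Nat.gcd a' b') * (g2 a b).1 := by
    rw [Nat.add_mul]; omega
  have hsb : b + b' = (Nat.gcd a b + Nat.gcd a' b') * (g2 a b).2 := by
    rw [Nat.add_mul]; omega
  rw [hsa, hsb, Nat.gcd_mul_left, hcop, Nat.mul_one]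

def lprop (u w : List ℕ) : Prop :=
  ∃ s t : ℕ, s ≠ 0 ∧ t ≠ 0 ∧ u.map (s * ·) = w.map (t * ·)

theorem between : ∀ (n : ℕ) (u v : List ℕ), 2 ≤ n → u.length = n → v.length = n →
    (∃ x ∈ u, x ≠ 0) → (∃ x ∈ v, x ≠ 0) →
    precL u (List.zipWith (· + ·) u v) ∨ lprop u (List.zipWith (· + ·) u v) ∨
      precL v (List.zipWith (· + ·) u v) := by
  intro n
  induction n using Nat.strong_induction_on with
  | _ n ih =>
    intro u v hn hu hv hunz hvnz
    rcases u with _ | ⟨a, _ | ⟨b, u⟩⟩ <;> simp only [List.length] at hu <;> try omega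
    rcases v with _ | ⟨a', _ | ⟨b', v⟩⟩ <;> simp only [List.length] at hv <;> try omega
    rcases u with _ | ⟨c, r⟩ <;> rcases v with _ | ⟨c', r'⟩ <;>
      simp only [List.length] at hu hv <;> try omega
    · -- base case: [a,b] vs [a',b']
      simp only [List.zipWith_cons_cons, List.zipWith_nil_right, precL_pair]
      simp only [List.mem_cons, List.not_mem_nil, or_false, exists_eq_or_imp,
        List.mem_singleton, exists_eq_left] at hunz hvnz
      rcases lt_trichotomy (a * b') (a' * b) with h | h | h
      · left; unfold prec2; simp only; nlinarith
      · right; left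
        by_cases ha : a = 0
        · have hb : b ≠ 0 := by tauto
          have ha' : a' = 0 := by
            rcases Nat.mul_eq_zero.mp (ha ▸ (by simpa [ha] using h.symm) : a' * b = 0) with h' | h'
            · exact h'
            · exact absurd h' hb
          exact ⟨b + b', b, by positivity, hb, by
            simp [ha, ha', List.map]; ring⟩
        · exact ⟨a + a', a, by positivity, ha, by
            simp only [List.map_cons, List.map_nil, List.cons.injEq]
            refine ⟨by ring, ?_, trivial⟩
            nlinarith⟩
      · right; right; unfold prec2; simp only; nlinarith
    · -- cons case
      simp only [List.zipWith_cons_cons, precL_cons]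
      have hlen : r.length + 3 = n := by omega
      by_cases hab : a = 0 ∧ b = 0 <;> by_cases hab' : a' = 0 ∧ b' = 0
      · -- both heads zero
        obtain ⟨rfl, rfl⟩ := hab; obtain ⟨rfl, rfl⟩ := hab'
        have hz : g2 0 0 = (0, 0) := g2_eq_zero_iff.mpr ⟨rfl, rfl⟩
        have h1 : (0:ℕ) + 0 = 0 := rfl
        have hIH := ih (n - 1) (by omega) (Nat.gcd 0 0 :: c :: r) (Nat.gcd 0 0 :: c' :: r')
          (by omega) (by simp; omega) (by simp; omega)
          (by
            simp only [Nat.gcd_self, List.mem_cons] at hunz ⊢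
            rcases hunz with ⟨x, hx, hx0⟩
            exact ⟨x, by tauto, hx0⟩)
          (by
            simp only [Nat.gcd_self, List.mem_cons] at hvnz ⊢
            rcases hvnz with ⟨x, hx, hx0⟩
            exact ⟨x, by tauto, hx0⟩)
        simp only [List.zipWith_cons_cons, Nat.gcd_self, Nat.add_zero] at hIH ⊢
        rcases hIH with h | h | h
        · exact Or.inl (Or.inr (Or.inr ⟨by trivial, h⟩))
        · right; left
          obtain ⟨s, t, hs, ht, hmap⟩ := h
          refine ⟨s, t, hs, ht, ?_⟩
          simp only [List.map_cons, List.cons.injEq] at hmap ⊢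
          exact ⟨by omega, by omega, hmap.2⟩
        · exact Or.inr (Or.inr (Or.inr (Or.inr ⟨by trivial, h⟩)))
      · -- u head zero, v head nonzero
        obtain ⟨rfl, rfl⟩ := hab
        left; left
        refine ⟨g2_eq_zero_iff.mpr ⟨rfl, rfl⟩, ?_⟩
        simp only [Nat.zero_add]
        exact fun h => hab' (g2_eq_zero_iff.mp h)
      · -- u head nonzero, v head zero
        obtain ⟨rfl, rfl⟩ := hab'
        right; right; left
        refine ⟨g2_eq_zero_iff.mpr ⟨rfl, rfl⟩, ?_⟩
        simp only [Nat.add_zero]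
        exact fun h => hab (g2_eq_zero_iff.mp h)
      · -- both heads nonzero
        have hsum : ¬(a + a' = 0 ∧ b + b' = 0) := by
          rintro ⟨h1, h2⟩; exact hab ⟨by omega, by omega⟩
        have hg2ab : g2 a b ≠ (0,0) := fun h => hab (g2_eq_zero_iff.mp h)
        have hg2ab' : g2 a' b' ≠ (0,0) := fun h => hab' (g2_eq_zero_iff.mp h)
        have hg2sum : g2 (a+a') (b+b') ≠ (0,0) := fun h => hsum (g2_eq_zero_iff.mp h)
        rcases lt_trichotomy (a * b') (a' * b) with h | h | h
        · left; right; left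
          refine ⟨hg2ab, hg2sum, ?_⟩
          rw [prec2_g2 hab hsum]
          unfold prec2; simp only; nlinarith
        · -- proportional heads
          obtain ⟨e1, e2, egcd⟩ := pair_sum hab hab' h
          obtain ⟨hg, ha, hb, -⟩ := g2_spec hab
          obtain ⟨hg', ha', hb', -⟩ := g2_spec hab'
          rw [← e1] at ha' hb'
          have hg0 : Nat.gcd a b ≠ 0 := hg
          have hIH := ih (n - 1) (by omega) (Nat.gcd a b :: c :: r) (Nat.gcd a' b' :: c' :: r')
            (by omega) (by simp; omega) (by simp; omega)
            ⟨Nat.gcd a b, by simp, hg0⟩ ⟨Nat.gcd a' b', by simp, hg'⟩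
          simp only [List.zipWith_cons_cons] at hIH
          rw [← egcd] at hIH
          rcases hIH with hh | hh | hh
          · exact Or.inl (Or.inr (Or.inr ⟨e2.symm, hh⟩))
          · right; left
            obtain ⟨s, t, hs, ht, hmap⟩ := hh
            refine ⟨s, t, hs, ht, ?_⟩
            simp only [List.map_cons, List.cons.injEq] at hmap ⊢
            obtain ⟨hm1, hm2, hm3⟩ := hmap
            rw [egcd] at hm1
            refine ⟨?_, ?_, hm2, hm3⟩
            · calc s * a = (s * Nat.gcd a b) * (g2 a b).1 := by rw [mul_assoc, ← ha]
                _ = (t * (Nat.gcd a b + Nat.gcd a' b')) * (g2 a b).1 := by rw [hm1]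
                _ = t * (a + a') := by
                    rw [mul_assoc]
                    congr 1
                    rw [Nat.add_mul]; omega
            · calc s * b = (s * Nat.gcd a b) * (g2 a b).2 := by rw [mul_assoc, ← hb]
                _ = (t * (Nat.gcd a b + Nat.gcd a' b')) * (g2 a b).2 := by rw [hm1]
                _ = t * (b + b') := by
                    rw [mul_assoc]
                    congr 1
                    rw [Nat.add_mul]; omega
          · exact Or.inr (Or.inr (Or.inr (Or.inr ⟨e1 ▸ e2.symm, hh⟩)))
        · right; right; right; left
          refine ⟨hg2ab', hg2sum, ?_⟩
          rw [prec2_g2 hab' hsum]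
          unfold prec2; simp only; nlinarith

theorem precL_unsmul : ∀ (n : ℕ) (u v : List ℕ) (t : ℕ), t ≠ 0 → 2 ≤ n → u.length = n →
    v.length = n → precL u (v.map (t * ·)) → precL u v := by
  intro n
  induction n using Nat.strong_induction_on with
  | _ n ih =>
    intro u v t ht hn hu hv h
    rcases u with _ | ⟨a, _ | ⟨b, u⟩⟩ <;> simp only [List.length] at hu <;> try omega
    rcases v with _ | ⟨a', _ | ⟨b', v⟩⟩ <;> simp only [List.length] at hv <;> try omega
    rcases u with _ | ⟨c, r⟩ <;> rcases v with _ | ⟨c', r'⟩ <;>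
      simp only [List.length] at hu hv <;> try omega
    · -- base case
      simp only [List.map_cons, List.map_nil, precL_pair] at h ⊢
      unfold prec2 at h ⊢
      simp only at h ⊢
      rw [mul_assoc, mul_assoc] at h
      exact Nat.lt_of_mul_lt_mul_left h
    · -- cons case
      simp only [List.map_cons, precL_cons] at h ⊢
      rw [g2_mul ht, Nat.gcd_mul_left] at h
      rcases h with h | h | h
      · exact Or.inl h
      · exact Or.inr (Or.inl h)
      · refine Or.inr (Or.inr ⟨h.1, ?_⟩)
        refine ih (n-1) (by omega) _ _ t ht (by omega) (by simp; omega) (by simp; omega) ?_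
        simpa only [List.map_cons] using h.2

lemma ofFn_zipWith {q : ℕ} (f g : Fin q → ℕ) :
    List.zipWith (· + ·) (List.ofFn f) (List.ofFn g) = List.ofFn (f + g) := by
  apply List.ext_getElem
  · simp
  · intro i h1 h2
    simp [List.getElem_zipWith]

lemma exists_ne_zero_ofFn {q : ℕ} (f : Fin q → ℕ) (h : f ≠ 0) :
    ∃ x ∈ List.ofFn f, x ≠ 0 := by
  obtain ⟨i, hi⟩ := Function.ne_iff.mp h
  exact ⟨f i, List.mem_ofFn.mpr ⟨i, rfl⟩, hi⟩

/-- If `D` is a `Δ`-variate Hasse–Schmidt derivation, `β ∈ Δ ∩ 𝒞^q`, and `D_γ = 0` for all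
nonzero `γ ∈ Δ` with `[γ] ≺ [β]`, then `E_r := D_{rβ}` is a Hasse–Schmidt derivation. -/
theorem diagonal_restriction_is_HS (q : ℕ) (hq : 2 ≤ q)
    (k A : Type*) [CommRing k] [CommRing A] [Algebra k A]
    (Δ : Set (Fin q → ℕ)) (hco : ∀ α' α : Fin q → ℕ, α' ≤ α → α ∈ Δ → α' ∈ Δ)
    (D : (Fin q → ℕ) → Module.End k A)
    (hD0 : D 0 = 1)
    (hLeib : ∀ α ∈ Δ, ∀ x y : A,
      D α (x * y) = ∑ β ∈ Finset.Iic α, D β x * D (α - β) y)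
    (β : Fin q → ℕ) (hβΔ : β ∈ Δ) (hβ0 : β ≠ 0) (hgcd : Finset.univ.gcd β = 1)
    (hvanish : ∀ γ ∈ Δ, γ ≠ 0 → precL (List.ofFn γ) (List.ofFn β) → D γ = 0) :
    D ((0 : ℕ) • β) = 1 ∧
      ∀ r : ℕ, r • β ∈ Δ → ∀ x y : A,
        D (r • β) (x * y) = ∑ s ∈ Finset.range (r + 1), D (s • β) x * D ((r - s) • β) y := by
  classical
  obtain ⟨i0, hi0⟩ : ∃ i, β i ≠ 0 := Function.ne_iff.mp hβ0
  refine ⟨by rw [zero_smul]; exact hD0, ?_⟩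
  intro r hrΔ x y
  rw [hLeib _ hrΔ x y]
  set S : Finset (Fin q → ℕ) := (Finset.range (r+1)).image (fun s => s • β) with hS
  have hsmul : ∀ (s : ℕ) (i : Fin q), (s • β) i = s * β i := fun s i => rfl
  have hsub : S ⊆ Finset.Iic (r • β) := by
    intro z hz
    rw [hS, Finset.mem_image] at hz
    obtain ⟨s, hs, rfl⟩ := hz
    rw [Finset.mem_Iic]
    intro i
    exact Nat.mul_le_mul_right _ (Nat.lt_succ_iff.mp (Finset.mem_range.mp hs))
  have hofFn : List.ofFn (r • β) = (List.ofFn β).map (fun z => r * z) := by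
    rw [List.map_ofFn]; rfl
  have hzero : ∀ β' ∈ Finset.Iic (r • β), β' ∉ S → D β' x * D (r • β - β') y = 0 := by
    intro β' hβ'le hβ'S
    have hle : β' ≤ r • β := Finset.mem_Iic.mp hβ'le
    by_cases hβ'0 : β' = 0
    · exact absurd (Finset.mem_image.mpr ⟨0, Finset.mem_range.mpr (by omega),
        by rw [zero_smul, hβ'0]⟩) hβ'S
    set σ := r • β - β' with hσ
    have hadd : β' + σ = r • β := funext fun i => Nat.add_sub_cancel' (hle i)
    by_cases hσ0 : σ = 0
    · refine absurd (Finset.mem_image.mpr ⟨r, Finset.mem_range.mpr (by omega), ?_⟩) hβ'S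
      rw [← hadd, hσ0, add_zero]
    have hr0 : r ≠ 0 := by
      rintro rfl
      rw [zero_smul] at hle
      exact hβ'0 (le_antisymm hle (by intro i; exact Nat.zero_le _))
    have hβ'Δ : β' ∈ Δ := hco β' _ hle hrΔ
    have hσΔ : σ ∈ Δ := hco σ _ (fun i => Nat.sub_le _ _) hrΔ
    have hB := between q (List.ofFn β') (List.ofFn σ) hq (by simp) (by simp)
      (exists_ne_zero_ofFn _ hβ'0) (exists_ne_zero_ofFn _ hσ0)
    rw [ofFn_zipWith, hadd] at hB
    rcases hB with h | h | h
    · have hp : precL (List.ofFn β') (List.ofFn β) :=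
        precL_unsmul q _ _ r hr0 hq (by simp) (by simp) (by rw [← hofFn]; exact h)
      rw [hvanish β' hβ'Δ hβ'0 hp]
      simp
    · exfalso
      obtain ⟨s, t, hs, ht, hmap⟩ := h
      rw [List.map_ofFn, List.map_ofFn] at hmap
      have hpt : ∀ i, s * β' i = t * (r * β i) :=
        fun i => congrFun (List.ofFn_inj.mp hmap) i
      set m := Finset.univ.gcd β' with hm
      have hsm : s * m = t * r := by
        have h1 : (Finset.univ.gcd fun i => s * β' i) = s * m := by
          simpa using (Finset.gcd_mul_left (s := (Finset.univ : Finset (Fin q)))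
            (f := β') (a := s))
        have h2 : (Finset.univ.gcd fun i => (t * r) * β i) = t * r := by
          have h3 := Finset.gcd_mul_left (s := (Finset.univ : Finset (Fin q)))
            (f := β) (a := t * r)
          rw [hgcd] at h3
          simpa using h3
        rw [← h1, ← h2]
        congr 1
        funext i
        rw [hpt i, mul_assoc]
      have hβ'm : β' = m • β := by
        funext i
        refine Nat.eq_of_mul_eq_mul_left (Nat.pos_of_ne_zero hs) ?_
        rw [hpt i, hsmul, ← mul_assoc, ← hsm, mul_assoc]
      have hmr : m ≤ r := by
        have := hle i0
        rw [hβ'm] at this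
        exact Nat.le_of_mul_le_mul_right (by exact this) (Nat.pos_of_ne_zero hi0)
      exact hβ'S (Finset.mem_image.mpr ⟨m, Finset.mem_range.mpr (by omega), hβ'm.symm⟩)
    · have hp : precL (List.ofFn σ) (List.ofFn β) :=
        precL_unsmul q _ _ r hr0 hq (by simp) (by simp) (by rw [← hofFn]; exact h)
      rw [hvanish σ hσΔ hσ0 hp]
      simp
  rw [← Finset.sum_subset hsub hzero, hS,
    Finset.sum_image (by
      intro s hs s' hs' hss
      have := congrFun hss i0
      exact Nat.eq_of_mul_eq_mul_right (Nat.pos_of_ne_zero hi0) this)]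
  refine Finset.sum_congr rfl fun s hs => ?_
  have heq : r • β - s • β = (r - s) • β := by
    funext i
    show r * β i - s * β i = (r - s) * β i
    rw [Nat.sub_mul]
  rw [heq]
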